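/- With notation as above, p = Π(t | (T₂+T₃) ∩ T₂^⊥) = 0 if and only if t = s − Π(s|T₂) is orthogonal to T₃. -/

import Mathlib

open scoped RealInnerProductSpace

/-- With `t = s − Π(s|T₂)` and `p = Π(t | (T₂⊔T₃) ⊓ T₂ᗮ)`, one has `p = 0` if and only if
`t` is orthogonal to `T₃`. -/
theorem projection_eq_zero_iff_orthogonal
    {H : Type*} [NormedAddCommGroup H] [InnerProductSpace ℝ H] [CompleteSpace H]
    (T₂ T₃ : Submodule ℝ H) [FiniteDimensional ℝ T₂] [CompleteSpace T₃]
    [CompleteSpace ↥(T₂ ⊔ T₃)] [CompleteSpace ↥((T₂ ⊔ T₃) ⊓ T₂ᗮ)]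
    (s t p : H)
    (ht : t = s - Submodule.orthogonalProjection T₂ s)
    (hp : p = Submodule.orthogonalProjection ((T₂ ⊔ T₃) ⊓ T₂ᗮ) t) :
    p = 0 ↔ ∀ b ∈ T₃, ⟪t, b⟫ = 0 := by
  have htK : t ∈ T₂ᗮ := by
    rw [ht]; exact Submodule.sub_starProjection_mem_orthogonal s
  have hiff : p = 0 ↔ t ∈ ((T₂ ⊔ T₃) ⊓ T₂ᗮ)ᗮ := by
    rw [hp]
    constructor
    · intro h
      rw [← Submodule.orthogonalProjectionOnto_eq_zero_iff]
      exact_mod_cast h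
    · intro h
      rw [Submodule.orthogonalProjectionOnto_eq_zero_iff.mpr h]
      simp
  rw [hiff]
  constructor
  · intro h b hb
    set b₂ : H := (Submodule.orthogonalProjection T₂ b : H) with hb₂
    have hmem : b - b₂ ∈ (T₂ ⊔ T₃) ⊓ T₂ᗮ := by
      refine ⟨?_, Submodule.sub_starProjection_mem_orthogonal b⟩
      exact Submodule.sub_mem _ (Submodule.mem_sup_right hb)
        (Submodule.mem_sup_left (Submodule.orthogonalProjection T₂ b).2)
    have h1 : ⟪t, b - b₂⟫ = 0 := by
      have := (Submodule.mem_orthogonal _ t).mp h _ hmem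
      rwa [real_inner_comm] at this
    have h2 : ⟪t, b₂⟫ = 0 := by
      have := (Submodule.mem_orthogonal _ t).mp htK _ (Submodule.orthogonalProjection T₂ b).2
      rwa [real_inner_comm] at this
    have : ⟪t, b⟫ = ⟪t, b - b₂⟫ + ⟪t, b₂⟫ := by
      rw [← inner_add_right, sub_add_cancel]
    rw [this, h1, h2, add_zero]
  · intro h
    rw [Submodule.mem_orthogonal]
    rintro u ⟨hu, -⟩
    rw [real_inner_comm]
    obtain ⟨a, ha, c, hc, rfl⟩ := Submodule.mem_sup.mp hu
    rw [inner_add_right, h c hc, add_zero, real_inner_comm]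
    exact htK a ha
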